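/- arXiv:2004.11731 — 2 statements merged into one kernel-verified Lean document; each statement's English description precedes it below -/
import Mathlib

section
/- Let m ≥ 1 be an integer and let p : Fin n → ℕ be integer periods such that m divides p i and p i ≥ m for all i. Let S_1, …, S_k be a partition of Fin n with k ≤ m. If for each j ∈ {1, …, k} the instance consisting of the jobs i ∈ S_j with periods p i / m admits a feasible pinwheel schedule, then the instance p admits a feasible pinwheel schedule. (Explicitly, if job i ∈ S_j is scheduled for the ℓ-th time on day σ_j(i, ℓ) in the subschedule, scheduling it for the ℓ-th time on day j + (σ_j(i, ℓ) − 1) · m in the combined schedule is feasible and assigns at most one job per day.) -/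
/-- A pinwheel schedule `σ` is feasible for a pseudo-instance of real periods `p`
if every job `i` is scheduled at least once in every window of `⌊p i⌋` consecutive days. -/
def PinwheelFeasibleR {n : ℕ} (p : Fin n → ℝ) (σ : ℕ → Option (Fin n)) : Prop :=
  ∀ (i : Fin n) (t : ℕ), ∃ s : ℕ, t ≤ s ∧ s < t + ⌊p i⌋₊ ∧ σ s = some i

/-- A pinwheel schedule `σ` is feasible for integer periods `p`
if every job `i` is scheduled at least once in every window of `p i` consecutive days. -/
def PinwheelFeasibleN {n : ℕ} (p : Fin n → ℕ) (σ : ℕ → Option (Fin n)) : Prop :=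
  ∀ (i : Fin n) (t : ℕ), ∃ s : ℕ, t ≤ s ∧ s < t + p i ∧ σ s = some i

/-- `lastCutPlusOne σ i t` is `t' + 1` where `t'` is the largest day `t' < t` with
`σ t' = some i` (bamboo `i` cut at the end of day `t'`), and `0` if there is no such day. -/
def lastCutPlusOne {n : ℕ} (σ : ℕ → Option (Fin n)) (i : Fin n) (t : ℕ) : ℕ :=
  Nat.findGreatest (fun u => 0 < u ∧ σ (u - 1) = some i) t

/-- The height reached by bamboo `i` on day `t` under trimming schedule `σ`:
`h i * (t + 1 - s)` where `s = lastCutPlusOne σ i t`. -/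
noncomputable def bambooHeight {n : ℕ} (h : Fin n → ℝ) (σ : ℕ → Option (Fin n))
    (i : Fin n) (t : ℕ) : ℝ :=
  h i * ((t + 1 : ℝ) - (lastCutPlusOne σ i t : ℝ))

/-- A trimming schedule `σ` achieves value `V` if the height reached by every
bamboo on every day is at most `V`. -/
noncomputable def TrimmingAchieves {n : ℕ} (h : Fin n → ℝ) (σ : ℕ → Option (Fin n))
    (V : ℝ) : Prop :=
  ∀ (i : Fin n) (t : ℕ), bambooHeight h σ i t ≤ V

/-- Interleaving lemma: if `m` divides every period, the jobs are
partitioned into `k ≤ m` groups, and each group admits a feasible pinwheel schedule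
for the scaled-down periods `p i / m`, then the whole instance admits a feasible
pinwheel schedule. -/
theorem pinwheel_interleaving (n m k : ℕ) (hm : 1 ≤ m) (p : Fin n → ℕ)
    (hdvd : ∀ i, m ∣ p i) (hge : ∀ i, m ≤ p i)
    (hk : k ≤ m) (S : Fin k → Finset (Fin n))
    (hpart : ∀ i : Fin n, ∃! j : Fin k, i ∈ S j)
    (hsub : ∀ j : Fin k, ∃ σj : ℕ → Option (Fin n),
      (∀ (t : ℕ) (i : Fin n), σj t = some i → i ∈ S j) ∧
      (∀ i ∈ S j, ∀ t : ℕ, ∃ s : ℕ, t ≤ s ∧ s < t + p i / m ∧ σj s = some i)) :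
    ∃ σ : ℕ → Option (Fin n), PinwheelFeasibleN p σ := by
  choose σj hσ1 hσ2 using hsub
  refine ⟨fun t => if h : t % m < k then σj ⟨t % m, h⟩ (t / m) else none, ?_⟩
  intro i t
  obtain ⟨j, hij, _⟩ := hpart i
  have hjm : j.val < m := lt_of_lt_of_le j.isLt hk
  -- t0 : starting index in the subschedule
  set t0 : ℕ := (t - j.val + m - 1) / m with ht0
  have hA : t ≤ m * t0 + j.val ∧ m * t0 + j.val < t + m := by
    have h1 : m * t0 + (t - j.val + m - 1) % m = t - j.val + m - 1 :=
      Nat.div_add_mod _ m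
    have h2 : (t - j.val + m - 1) % m < m := Nat.mod_lt _ (by omega)
    have h3 : m * t0 = 0 ∨ m ≤ m * t0 := by
      rcases Nat.eq_zero_or_pos t0 with h | h
      · left; rw [h, Nat.mul_zero]
      · right; exact Nat.le_mul_of_pos_right m h
    generalize m * t0 = X at h1 h3 ⊢
    omega
  obtain ⟨s', hs1, hs2, hs3⟩ := hσ2 j i hij t0
  refine ⟨m * s' + j.val, ?_, ?_, ?_⟩
  · calc t ≤ m * t0 + j.val := hA.1
      _ ≤ m * s' + j.val := by
        exact Nat.add_le_add_right (Nat.mul_le_mul_left m hs1) _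
  · have key : m * (s' + 1) ≤ m * t0 + p i := by
      calc m * (s' + 1) ≤ m * (t0 + p i / m) := Nat.mul_le_mul_left m (by omega)
        _ = m * t0 + p i := by rw [Nat.mul_add, Nat.mul_div_cancel' (hdvd i)]
    have : m * s' + j.val + m ≤ m * t0 + p i + j.val := by
      have : m * s' + m = m * (s' + 1) := by ring
      omega
    have := hA.2
    omega
  · have hsm : (m * s' + j.val) % m = j.val := by
      rw [Nat.mul_add_mod, Nat.mod_eq_of_lt hjm]
    have hsd : (m * s' + j.val) / m = s' := by
      rw [Nat.mul_add_div (by omega), Nat.div_eq_of_lt hjm, add_zero]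
    simp only [hsm, hsd]
    rw [dif_pos j.isLt]
    simpa using hs3
end

section
/- Let n ≥ 2 and let h : Fin n → ℝ be growth rates with h i > 0 for all i. If a trimming schedule σ for h achieves value V (every bamboo's height on every day is at most V), then V ≥ 2 · max_i h i. -/
/-- For n ≥ 2, twice the maximum growth rate is a lower bound on the
value of any trimming schedule (Della Croce). -/
theorem trimming_value_ge_two_max (n : ℕ) (hn : 2 ≤ n) (h : Fin n → ℝ)
    (hpos : ∀ i, 0 < h i) (σ : ℕ → Option (Fin n)) (V : ℝ)
    (hach : TrimmingAchieves h σ V) :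
    2 * Finset.univ.sup' ⟨⟨0, by omega⟩, Finset.mem_univ _⟩ h ≤ V := by
  obtain ⟨i, -, hi⟩ := Finset.exists_mem_eq_sup' ⟨⟨0, by omega⟩, Finset.mem_univ _⟩ h
  rw [hi]
  by_cases hc : ∃ t, σ t ≠ some i
  · obtain ⟨t, ht⟩ := hc
    have hle : lastCutPlusOne σ i (t + 1) ≤ t := by
      rcases Nat.lt_or_ge (lastCutPlusOne σ i (t + 1)) (t + 1) with h1 | h1
      · omega
      · have h2 : lastCutPlusOne σ i (t + 1) = t + 1 :=
          le_antisymm (Nat.findGreatest_le _) h1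
        have := (Nat.findGreatest_eq_iff.1 h2).2.1 (by omega)
        exact (ht this.2).elim
    have hV := hach i (t + 1)
    unfold bambooHeight at hV
    have : 2 * h i ≤ h i * ((t + 1 + 1 : ℝ) - (lastCutPlusOne σ i (t + 1) : ℝ)) := by
      have hcast : (lastCutPlusOne σ i (t + 1) : ℝ) ≤ t := by exact_mod_cast hle
      nlinarith [hpos i]
    push_cast at hV ⊢
    linarith
  · push_neg at hc
    -- every day cuts i, so any j ≠ i is never cut
    have hij : ∃ j : Fin n, j ≠ i := by
      by_cases h0 : i = ⟨0, by omega⟩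
      · exact ⟨⟨1, by omega⟩, by simp [h0, Fin.ext_iff]⟩
      · exact ⟨⟨0, by omega⟩, fun e => h0 e.symm⟩
    obtain ⟨j, hj⟩ := hij
    have hzero : ∀ t, lastCutPlusOne σ j t = 0 := by
      intro t
      apply Nat.findGreatest_eq_zero_iff.2
      intro m hm _ hP
      have := hc (m - 1)
      rw [hP.2] at this
      exact hj (by injection this)
    obtain ⟨t, ht⟩ := exists_nat_ge (2 * h i / h j)
    have hV := hach j t
    unfold bambooHeight at hV
    rw [hzero] at hV
    push_cast at hV
    have hjpos := hpos j
    have : 2 * h i ≤ h j * ((t : ℝ) + 1 - 0) := by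
      rw [div_le_iff₀ hjpos] at ht
      nlinarith
    linarith
end
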